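/- Let n ≥ 2 be an integer and H_{3n} = G_{3n} □ K_3. For any two vertices x = (x_1, x_2) and y = (y_1, y_2) of H_{3n}, the distance satisfies d_{H_{3n}}(x, y) ≤ 2n + 1, and d_{H_{3n}}(x, y) = 2n + 1 if and only if d_{G_{3n}}(x_1, y_1) = 2n and x_2 ≠ y_2. -/

import Mathlib

open SimpleGraph

/-- The `k`th power of a graph `G`: two distinct vertices are adjacent iff their
distance in `G` is (finite and) at most `k`. -/
def SimpleGraph.power {V : Type*} (G : SimpleGraph V) (k : ℕ) : SimpleGraph V where
  Adj u v := u ≠ v ∧ G.Reachable u v ∧ G.dist u v ≤ k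
  symm := by
    constructor
    rintro u v ⟨h1, h2, h3⟩
    exact ⟨h1.symm, h2.symm, by rwa [SimpleGraph.dist_comm]⟩
  loopless := by
    constructor
    rintro v ⟨h1, -, -⟩
    exact h1 rfl

/-- `G` admits a proper coloring from the lists `L`. -/
def SimpleGraph.Choosable {V : Type*} (G : SimpleGraph V) (L : V → Finset ℕ) : Prop :=
  ∃ φ : V → ℕ, (∀ v, φ v ∈ L v) ∧ ∀ u v, G.Adj u v → φ u ≠ φ v

/-- The list chromatic number of `G`: the least `t` such that `G` is colorable from
any assignment of lists of size at least `t`. -/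
noncomputable def SimpleGraph.listChromaticNumber {V : Type*} (G : SimpleGraph V) : ℕ :=
  sInf {t : ℕ | ∀ L : V → Finset ℕ, (∀ v, t ≤ (L v).card) → G.Choosable L}

/-- The lexicographic product of two graphs. -/
def SimpleGraph.lexProd {V W : Type*} (G : SimpleGraph V) (H : SimpleGraph W) :
    SimpleGraph (V × W) where
  Adj a b := G.Adj a.1 b.1 ∨ (a.1 = b.1 ∧ H.Adj a.2 b.2)
  symm := by
    constructor
    rintro a b (h | ⟨h1, h2⟩)
    · exact Or.inl h.symm
    · exact Or.inr ⟨h1.symm, h2.symm⟩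
  loopless := by
    constructor
    rintro a (h | ⟨-, h2⟩)
    · exact G.loopless.irrefl _ h
    · exact H.loopless.irrefl _ h2

/-- Vertex set `Γ_m`: the vectors in `ℤ_3^m` whose coordinates sum to zero. -/
def GammaVert (m : ℕ) : Type := {z : Fin m → ZMod 3 // ∑ i, z i = 0}

/-- The generator `x_{i,j}`: `1` in coordinate `i`, `2` in coordinate `j`, `0` elsewhere. -/
def xvec (m : ℕ) (i j : Fin m) : Fin m → ZMod 3 :=
  fun l => if l = i then 1 else if l = j then 2 else 0

/-- The Cayley graph `G_m` on `Γ_m` with connection set `X_m = {x_{i,j} : i ≠ j}`. -/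
def Gm (m : ℕ) : SimpleGraph (GammaVert m) where
  Adj y z := ∃ i j : Fin m, i ≠ j ∧ y.1 - z.1 = xvec m i j
  symm := by
    constructor
    rintro y z ⟨i, j, hij, h⟩
    refine ⟨j, i, hij.symm, ?_⟩
    have h' : z.1 - y.1 = -(y.1 - z.1) := by ring
    rw [h', h]
    funext l
    simp only [xvec, Pi.neg_apply]
    by_cases h1 : l = i
    · subst h1
      simp only [if_pos rfl, if_neg hij]
      decide
    · by_cases h2 : l = j
      · subst h2
        simp only [if_pos rfl, if_neg h1]
        decide
      · simp only [if_neg h1, if_neg h2]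
        decide
  loopless := by
    constructor
    rintro y ⟨i, j, hij, h⟩
    have := congrFun h i
    simp [xvec] at this

section Aux

lemma exists_proj_walks {α β : Type*} {G : SimpleGraph α} {H : SimpleGraph β} :
    ∀ {x y : α × β} (w : (G.boxProd H).Walk x y),
    ∃ (w1 : G.Walk x.1 y.1) (w2 : H.Walk x.2 y.2), w1.length + w2.length ≤ w.length := by
  intro x y w
  induction w with
  | nil => exact ⟨.nil, .nil, le_refl 0⟩
  | @cons a b c h w ih =>
      obtain ⟨w1, w2, hw⟩ := ih
      have hl := SimpleGraph.Walk.length_cons h w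
      rcases h with ⟨hG, he⟩ | ⟨hH, he⟩
      · exact ⟨SimpleGraph.Walk.cons hG w1, w2.copy he.symm rfl, by
          simp only [SimpleGraph.Walk.length_cons, SimpleGraph.Walk.length_copy]; omega⟩
      · exact ⟨w1.copy he.symm rfl, SimpleGraph.Walk.cons hH w2, by
          simp only [SimpleGraph.Walk.length_cons, SimpleGraph.Walk.length_copy]; omega⟩

lemma boxProd_dist_eq {α β : Type*} {G : SimpleGraph α} {H : SimpleGraph β} {x y : α × β}
    (h1 : G.Reachable x.1 y.1) (h2 : H.Reachable x.2 y.2) :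
    (G.boxProd H).dist x y = G.dist x.1 y.1 + H.dist x.2 y.2 := by
  obtain ⟨x1, x2⟩ := x
  obtain ⟨y1, y2⟩ := y
  obtain ⟨w1, hw1⟩ := h1.exists_walk_length_eq_dist
  obtain ⟨w2, hw2⟩ := h2.exists_walk_length_eq_dist
  have hbig : ((w1.boxProdLeft H x2).append (w2.boxProdRight G y1)).length
      = G.dist x1 y1 + H.dist x2 y2 := by
    simp [SimpleGraph.Walk.length_append, SimpleGraph.Walk.boxProdLeft,
      SimpleGraph.Walk.boxProdRight, SimpleGraph.Walk.length_map, hw1, hw2]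
    exact (SimpleGraph.Walk.length_append _ _).trans ((congrArg₂ (· + ·) (SimpleGraph.Walk.length_map _ w1)
      (SimpleGraph.Walk.length_map _ w2)).trans (by rw [hw1, hw2]))
  apply le_antisymm
  · exact hbig ▸ SimpleGraph.dist_le _
  · have hr : (G.boxProd H).Reachable (x1, x2) (y1, y2) :=
      ⟨(w1.boxProdLeft H x2).append (w2.boxProdRight G y1)⟩
    obtain ⟨w, hw⟩ := hr.exists_walk_length_eq_dist
    obtain ⟨u1, u2, hu⟩ := exists_proj_walks w
    have d1 := SimpleGraph.dist_le u1
    have d2 := SimpleGraph.dist_le u2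
    omega

/-- `IsSum m k z` : `z` is a sum of `k` generators. -/
def IsSum (m : ℕ) : ℕ → (Fin m → ZMod 3) → Prop
  | 0, z => z = 0
  | (k+1), z => ∃ i j, i ≠ j ∧ IsSum m k (z - xvec m i j)

lemma xvec_self1 (m : ℕ) (i j : Fin m) : xvec m i j i = 1 := by simp [xvec]

lemma xvec_self2 (m : ℕ) {i j : Fin m} (h : j ≠ i) : xvec m i j j = 2 := by simp [xvec, h]

lemma xvec_zero (m : ℕ) {i j l : Fin m} (h1 : l ≠ i) (h2 : l ≠ j) : xvec m i j l = 0 := by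
  simp [xvec, h1, h2]

lemma sum_xvec (m : ℕ) {i j : Fin m} (hij : i ≠ j) : ∑ l, xvec m i j l = 0 := by
  have h : ∀ l, xvec m i j l = (if l = i then (1 : ZMod 3) else 0)
      + (if l = j then 2 else 0) := by
    intro l
    unfold xvec
    by_cases h1 : l = i
    · subst h1
      simp [hij]
    · by_cases h2 : l = j
      · subst h2
        simp [h1]
      · simp [h1, h2]
  simp only [h]
  rw [Finset.sum_add_distrib, Finset.sum_ite_eq' Finset.univ i (fun _ => (1 : ZMod 3)),
    Finset.sum_ite_eq' Finset.univ j (fun _ => (2 : ZMod 3))]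
  simp only [Finset.mem_univ, if_true]
  decide

lemma isSum_walk (m : ℕ) : ∀ (k : ℕ) (u v : GammaVert m), IsSum m k (u.1 - v.1) →
    ∃ w : (Gm m).Walk u v, w.length = k := by
  intro k
  induction k with
  | zero =>
      intro u v h
      have huv : u = v := Subtype.ext (by rwa [← sub_eq_zero])
      subst huv
      exact ⟨.nil, rfl⟩
  | succ k ih =>
      intro u v h
      obtain ⟨i, j, hij, h'⟩ := h
      have hsum' : ∑ l, (u.1 - xvec m i j) l = 0 := by
        simp only [Pi.sub_apply]
        rw [Finset.sum_sub_distrib, u.2, sum_xvec m hij, sub_zero]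
      have hadj : (Gm m).Adj u ⟨u.1 - xvec m i j, hsum'⟩ := ⟨i, j, hij, sub_sub_cancel _ _⟩
      have h'' : IsSum m k ((⟨u.1 - xvec m i j, hsum'⟩ : GammaVert m).1 - v.1) := by
        have he : u.1 - xvec m i j - v.1 = u.1 - v.1 - xvec m i j := sub_right_comm _ _ _
        exact he ▸ h'
      obtain ⟨w, hw⟩ := ih ⟨u.1 - xvec m i j, hsum'⟩ v h''
      exact ⟨SimpleGraph.Walk.cons hadj w, by exact (SimpleGraph.Walk.length_cons hadj w).trans (congrArg (· + 1) hw)⟩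

lemma key (m : ℕ) : ∀ N (z : Fin m → ZMod 3), (∑ l, z l) = 0 →
    (Finset.univ.filter (fun l => z l ≠ 0)).card = N →
    ∃ k, 3 * k ≤ 2 * N ∧ IsSum m k z := by
  intro N
  induction N using Nat.strong_induction_on with
  | _ N ih =>
    intro z hsum hcard
    by_cases h0 : ∀ l, z l = 0
    · exact ⟨0, Nat.zero_le _, funext h0⟩
    push_neg at h0
    obtain ⟨i0, hi0⟩ := h0
    have hval : ∀ a : ZMod 3, a ≠ 0 → a = 1 ∨ a = 2 := by decide
    have hmem : ∀ l, z l ≠ 0 → l ∈ Finset.univ.filter (fun l => z l ≠ 0) := by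
      intro l hl
      simp only [Finset.mem_filter, Finset.mem_univ, true_and]
      exact hl
    by_cases hcase : (∃ i, z i = 1) ∧ (∃ j, z j = 2)
    · obtain ⟨⟨i, hi⟩, ⟨j, hj⟩⟩ := hcase
      have hij : i ≠ j := by
        rintro rfl
        rw [hi] at hj
        exact (by decide : (1 : ZMod 3) ≠ 2) hj
      have hz'val : ∀ l, (z - xvec m i j) l = if l = i then 0 else if l = j then 0 else z l := by
        intro l
        simp only [Pi.sub_apply]
        by_cases h1 : l = i
        · subst h1
          rw [if_pos rfl, xvec_self1, hi]
          decide
        · by_cases h2 : l = j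
          · subst h2
            rw [if_neg h1, if_pos rfl, xvec_self2 m (Ne.symm hij), hj]
            decide
          · rw [if_neg h1, if_neg h2, xvec_zero m h1 h2, sub_zero]
      have hsum' : ∑ l, (z - xvec m i j) l = 0 := by
        simp only [Pi.sub_apply]
        rw [Finset.sum_sub_distrib, hsum, sum_xvec m hij, sub_zero]
      have hfilt : Finset.univ.filter (fun l => (z - xvec m i j) l ≠ 0)
          = ((Finset.univ.filter (fun l => z l ≠ 0)).erase i).erase j := by
        ext l
        simp only [Finset.mem_filter, Finset.mem_univ, true_and, Finset.mem_erase, hz'val]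
        by_cases h1 : l = i
        · simp [h1]
        · by_cases h2 : l = j <;> simp [h1, h2]
      have himem : i ∈ Finset.univ.filter (fun l => z l ≠ 0) :=
        hmem i (by rw [hi]; decide)
      have hjmem : j ∈ (Finset.univ.filter (fun l => z l ≠ 0)).erase i :=
        Finset.mem_erase.mpr ⟨hij.symm, hmem j (by rw [hj]; decide)⟩
      have hcard' : (Finset.univ.filter (fun l => (z - xvec m i j) l ≠ 0)).card = N - 2 := by
        rw [hfilt, Finset.card_erase_of_mem hjmem, Finset.card_erase_of_mem himem, hcard]
        omega
      have hN2 : 2 ≤ N := by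
        have h1 : 1 ≤ (Finset.univ.filter (fun l => z l ≠ 0)).card :=
          Finset.card_pos.mpr ⟨i, himem⟩
        have h2 := Finset.card_erase_of_mem himem
        have h3 : 1 ≤ ((Finset.univ.filter (fun l => z l ≠ 0)).erase i).card :=
          Finset.card_pos.mpr ⟨j, hjmem⟩
        omega
      obtain ⟨k, hk, hks⟩ := ih (N - 2) (by omega) _ hsum' hcard'
      exact ⟨k + 1, by omega, ⟨i, j, hij, hks⟩⟩
    · rw [not_and_or] at hcase
      obtain ⟨a, ha12, hall⟩ : ∃ a : ZMod 3, (a = 1 ∨ a = 2) ∧ ∀ l, z l ≠ 0 → z l = a := by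
        rcases hcase with h | h
        · push_neg at h
          exact ⟨2, Or.inr rfl, fun l hl => (hval _ hl).resolve_left (h l)⟩
        · push_neg at h
          exact ⟨1, Or.inl rfl, fun l hl => (hval _ hl).resolve_right (h l)⟩
      set s := Finset.univ.filter (fun l => z l ≠ 0) with hs
      have hmem_s : ∀ l, l ∈ s ↔ z l ≠ 0 := by
        intro l
        simp [hs]
      have hzs : ∀ l ∈ s, z l = a := fun l hl => hall l ((hmem_s l).mp hl)
      have hsumconst : ∑ l ∈ s, z l = 0 := by
        rw [hs, Finset.sum_filter_of_ne (fun x _ hx => hx), hsum]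
      have hsa : ∑ l ∈ s, z l = (N : ZMod 3) * a :=
        calc ∑ l ∈ s, z l = ∑ _l ∈ s, a := Finset.sum_congr rfl hzs
          _ = s.card • a := Finset.sum_const a
          _ = (N : ZMod 3) * a := by rw [nsmul_eq_mul, hcard]
      have hN0 : (N : ZMod 3) = 0 := by
        have h := hsa.symm.trans hsumconst
        rcases ha12 with rfl | rfl
        · simpa using h
        · have h2 : ((N : ZMod 3) * 2) * 2 = 0 := by rw [h, zero_mul]
          rwa [mul_assoc, (by decide : (2 : ZMod 3) * 2 = 1), mul_one] at h2
      have hdvd : 3 ∣ N := (ZMod.natCast_eq_zero_iff N 3).mp hN0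
      have hi0s : i0 ∈ s := (hmem_s i0).mpr hi0
      have hN1 : 1 ≤ N := by rw [← hcard]; exact Finset.card_pos.mpr ⟨i0, hi0s⟩
      have hN3 : 3 ≤ N := by omega
      obtain ⟨j, hjs, hji⟩ := Finset.exists_mem_ne (by rw [hcard]; omega) i0
      have hsd : 1 ≤ (s \ {i0, j}).card := by
        have h1 := Finset.le_card_sdiff ({i0, j} : Finset (Fin m)) s
        have h2 : ({i0, j} : Finset (Fin m)).card ≤ 2 :=
          (Finset.card_insert_le _ _).trans (by simp)
        rw [hcard] at h1
        omega
      obtain ⟨k0, hk0⟩ := Finset.card_pos.mp (by omega : 0 < (s \ {i0, j}).card)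
      have hk0s : k0 ∈ s := (Finset.mem_sdiff.mp hk0).1
      have hk0ne : k0 ≠ i0 ∧ k0 ≠ j := by
        have := (Finset.mem_sdiff.mp hk0).2
        simp only [Finset.mem_insert, Finset.mem_singleton] at this
        tauto
      have hki : k0 ≠ i0 := hk0ne.1
      have hkj : k0 ≠ j := hk0ne.2
      have hzi0 : z i0 = a := hzs i0 hi0s
      have hzj : z j = a := hzs j hjs
      have hzk : z k0 = a := hzs k0 hk0s
      obtain ⟨p1, q1, p2, q2, hpq1, hpq2, hg⟩ :
          ∃ p1 q1 p2 q2 : Fin m, p1 ≠ q1 ∧ p2 ≠ q2 ∧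
            ∀ l, (z - xvec m p1 q1 - xvec m p2 q2) l
              = if l = i0 then 0 else if l = j then 0 else if l = k0 then 0 else z l := by
        rcases ha12 with rfl | rfl
        · -- a = 1 : use generators x_{j,i0} and x_{k0,i0}
          refine ⟨j, i0, k0, i0, hji, hki, fun l => ?_⟩
          simp only [Pi.sub_apply]
          by_cases h1 : l = i0
          · subst h1
            rw [if_pos rfl, xvec_self2 m (Ne.symm hji), xvec_self2 m (Ne.symm hki), hzi0]
            decide
          · by_cases h2 : l = j
            · subst h2
              rw [if_neg h1, if_pos rfl, xvec_self1, xvec_zero m (Ne.symm hkj) h1, hzj]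
              decide
            · by_cases h3 : l = k0
              · subst h3
                rw [if_neg h1, if_neg h2, if_pos rfl, xvec_zero m hkj h1, xvec_self1, hzk]
                decide
              · rw [if_neg h1, if_neg h2, if_neg h3, xvec_zero m h2 h1, xvec_zero m h3 h1,
                  sub_zero, sub_zero]
        · -- a = 2 : use generators x_{i0,j} and x_{i0,k0}
          refine ⟨i0, j, i0, k0, Ne.symm hji, Ne.symm hki, fun l => ?_⟩
          simp only [Pi.sub_apply]
          by_cases h1 : l = i0
          · subst h1
            rw [if_pos rfl, xvec_self1, xvec_self1, hzi0]
            decide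
          · by_cases h2 : l = j
            · subst h2
              rw [if_neg h1, if_pos rfl, xvec_self2 m hji, xvec_zero m h1 (Ne.symm hkj), hzj]
              decide
            · by_cases h3 : l = k0
              · subst h3
                rw [if_neg h1, if_neg h2, if_pos rfl, xvec_zero m h1 hkj, xvec_self2 m hki, hzk]
                decide
              · rw [if_neg h1, if_neg h2, if_neg h3, xvec_zero m h1 h2, xvec_zero m h1 h3,
                  sub_zero, sub_zero]
      have hsum' : ∑ l, (z - xvec m p1 q1 - xvec m p2 q2) l = 0 := by
        simp only [Pi.sub_apply]
        rw [Finset.sum_sub_distrib, Finset.sum_sub_distrib, hsum, sum_xvec m hpq1,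
          sum_xvec m hpq2, sub_zero, sub_zero]
      have hjmem2 : j ∈ s.erase i0 := Finset.mem_erase.mpr ⟨hji, hjs⟩
      have hkmem2 : k0 ∈ (s.erase i0).erase j :=
        Finset.mem_erase.mpr ⟨hkj, Finset.mem_erase.mpr ⟨hki, hk0s⟩⟩
      have hfilt : Finset.univ.filter (fun l => (z - xvec m p1 q1 - xvec m p2 q2) l ≠ 0)
          = ((s.erase i0).erase j).erase k0 := by
        ext l
        simp only [Finset.mem_filter, Finset.mem_univ, true_and, Finset.mem_erase, hg, hmem_s]
        by_cases h1 : l = i0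
        · simp [h1]
        · by_cases h2 : l = j
          · simp [h1, h2]
          · by_cases h3 : l = k0 <;> simp [h1, h2, h3]
      have hcard' : (Finset.univ.filter (fun l => (z - xvec m p1 q1 - xvec m p2 q2) l ≠ 0)).card
          = N - 3 := by
        rw [hfilt, Finset.card_erase_of_mem hkmem2, Finset.card_erase_of_mem hjmem2,
          Finset.card_erase_of_mem hi0s, hcard]
        omega
      obtain ⟨k, hk, hks⟩ := ih (N - 3) (by omega) _ hsum' hcard'
      exact ⟨k + 2, by omega, ⟨p1, q1, hpq1, ⟨p2, q2, hpq2, hks⟩⟩⟩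

lemma Gm_bound (n : ℕ) (u v : GammaVert (3 * n)) :
    (Gm (3 * n)).Reachable u v ∧ (Gm (3 * n)).dist u v ≤ 2 * n := by
  have hsum : ∑ l, (u.1 - v.1) l = 0 := by
    simp only [Pi.sub_apply]
    rw [Finset.sum_sub_distrib, u.2, v.2, sub_zero]
  obtain ⟨k, hk, hks⟩ := key (3 * n) _ (u.1 - v.1) hsum rfl
  have hNle : (Finset.univ.filter (fun l => (u.1 - v.1) l ≠ 0)).card ≤ 3 * n := by
    refine le_trans (Finset.card_filter_le _ _) ?_
    simp
  obtain ⟨w, hw⟩ := isSum_walk _ k u v hks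
  refine ⟨⟨w⟩, ?_⟩
  have hd := SimpleGraph.dist_le w
  omega

end Aux

/-- Let `n ≥ 2` and `H_{3n} = G_{3n} □ K_3`. For any two vertices `x = (x₁, x₂)` and
`y = (y₁, y₂)` of `H_{3n}`, `d(x,y) ≤ 2n + 1`, and `d(x,y) = 2n + 1` iff
`d_{G_{3n}}(x₁, y₁) = 2n` and `x₂ ≠ y₂`. -/
theorem dist_boxProd (n : ℕ) (hn : 2 ≤ n) (x y : GammaVert (3 * n) × Fin 3) :
    ((Gm (3 * n)).boxProd (⊤ : SimpleGraph (Fin 3))).dist x y ≤ 2 * n + 1 ∧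
    (((Gm (3 * n)).boxProd (⊤ : SimpleGraph (Fin 3))).dist x y = 2 * n + 1 ↔
      ((Gm (3 * n)).dist x.1 y.1 = 2 * n ∧ x.2 ≠ y.2)) := by
  obtain ⟨hr1, hd1⟩ := Gm_bound n x.1 y.1
  have hr2 : (⊤ : SimpleGraph (Fin 3)).Reachable x.2 y.2 := by
    by_cases h : x.2 = y.2
    · rw [h]
    · exact SimpleGraph.Adj.reachable (by simp only [SimpleGraph.top_adj]; exact h)
  have hbox := boxProd_dist_eq hr1 hr2
  by_cases h : x.2 = y.2
  · have hH : (⊤ : SimpleGraph (Fin 3)).dist x.2 y.2 = 0 := by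
      rw [h]
      exact SimpleGraph.dist_self
    rw [hbox, hH]
    refine ⟨by omega, ?_⟩
    constructor
    · intro he
      omega
    · rintro ⟨-, hne⟩
      exact absurd h hne
  · have hH := SimpleGraph.dist_top_of_ne h
    rw [hbox, hH]
    refine ⟨by omega, ?_⟩
    constructor
    · intro he
      exact ⟨by omega, h⟩
    · rintro ⟨hd, -⟩
      omega
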